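/- Let x, y, h be positive integers with y ≥ 2x - 1. If A = {0} ∪ [x, y], then the h-fold sumset hA equals {0} ∪ [x, hy]. -/

import Mathlib

open Finset Pointwise

/-- The `h`-fold sumset: all sums of `h` elements of `A` (with repetition). -/
def hfold : ℕ → Finset ℤ → Finset ℤ
  | 0, _ => {0}
  | n + 1, A => A + hfold n A

lemma key_add (x y m : ℤ) (hx : 0 < x) (hyx : 2 * x - 1 ≤ y) (hm : y ≤ m) :
    insert 0 (Icc x y) + insert 0 (Icc x m) = insert 0 (Icc x (m + y)) := by
  ext z
  simp only [Finset.mem_add, mem_insert, mem_Icc]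
  constructor
  · rintro ⟨a, ha, b, hb, rfl⟩
    rcases ha with rfl | ha <;> rcases hb with rfl | hb <;> omega
  · rintro (rfl | hz)
    · exact ⟨0, Or.inl rfl, 0, Or.inl rfl, by ring⟩
    · by_cases h2 : z ≤ y
      · exact ⟨z, Or.inr ⟨hz.1, h2⟩, 0, Or.inl rfl, by ring⟩
      · by_cases h1 : z - x ≤ m
        · exact ⟨x, Or.inr ⟨le_refl x, by omega⟩, z - x, Or.inr ⟨by omega, h1⟩, by ring⟩
        · exact ⟨z - m, Or.inr ⟨by omega, by omega⟩, m, Or.inr ⟨by omega, le_refl m⟩, by ring⟩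

theorem stmt5 (x y : ℤ) (h : ℕ) (hx : 0 < x) (hy : 0 < y) (hh : 0 < h)
    (hyx : 2 * x - 1 ≤ y) (A : Finset ℤ)
    (hA : A = insert 0 (Icc x y)) :
    hfold h A = insert 0 (Icc x ((h : ℤ) * y)) := by
  subst hA
  induction h with
  | zero => omega
  | succ n ih =>
    rcases Nat.eq_zero_or_pos n with rfl | hn
    · show insert 0 (Icc x y) + hfold 0 _ = _
      rw [show hfold 0 (insert 0 (Icc x y)) = {0} from rfl]
      ext z
      simp only [Finset.mem_add, Finset.mem_singleton, mem_insert, mem_Icc]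
      push_cast
      constructor
      · rintro ⟨a, ha, b, rfl, rfl⟩
        rcases ha with rfl | ha <;> omega
      · rintro (rfl | hz)
        · exact ⟨0, Or.inl rfl, by simp⟩
        · exact ⟨z, Or.inr (by omega), by simp⟩
    · have hn1 : (1 : ℤ) ≤ (n : ℤ) := by exact_mod_cast hn
      have hm : y ≤ (n : ℤ) * y := by nlinarith
      show insert 0 (Icc x y) + hfold n _ = _
      rw [ih hn, key_add x y ((n : ℤ) * y) hx hyx hm,
        show ((n + 1 : ℕ) : ℤ) * y = (n : ℤ) * y + y by push_cast; ring]
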